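/- Define the Hölder estimate hₖ by h₀ = 0 and hₖ = max{hₖ₋₁, (3/‖vₖ‖²)(f(xₖ) − f(xₖ₋₁) − (1/2)⟨∇f(xₖ₋₁)+∇f(xₖ), vₖ⟩), √(8/(k Sₖ)) (‖∇f(x̄ₖ)‖ − (ℓ/k)‖vₖ‖)} along the heavy-ball iterates. If f is twice differentiable with ν-Hölder continuous Hessian with constant H_ν for some ν ∈ [0,1], then hₖ ≤ H_ν (k Sₖ)^{ν/2} for all k ≥ 1. -/

import Mathlib

open Finset

section Helpers

lemma sum_range_id_real' (n : ℕ) : ∑ i ∈ range n, (i:ℝ) = n*(n-1)/2 := by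
  induction n with
  | zero => simp
  | succ n ih => rw [Finset.sum_range_succ, ih]; push_cast; ring

lemma gsum_eval' (k m : ℕ) (hmk : m ≤ k) :
    ∑ i ∈ range m, ∑ j ∈ Ico m k, ((j:ℝ) - (i:ℝ))
      = (m:ℝ) * k * ((k:ℝ) - m) / 2 := by
  have hico : ∑ j ∈ Ico m k, (j:ℝ) = (k:ℝ)*((k:ℝ)-1)/2 - (m:ℝ)*((m:ℝ)-1)/2 := by
    rw [Finset.sum_Ico_eq_sub _ hmk, sum_range_id_real', sum_range_id_real']
  have hcard : ((Ico m k).card : ℝ) = (k:ℝ) - (m:ℝ) := by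
    rw [Nat.card_Ico]; push_cast [Nat.cast_sub hmk]; ring
  calc ∑ i ∈ range m, ∑ j ∈ Ico m k, ((j:ℝ) - (i:ℝ))
      = ∑ i ∈ range m, ((∑ j ∈ Ico m k, (j:ℝ)) - ((Ico m k).card : ℝ) * i) := by
        apply Finset.sum_congr rfl
        intro i _
        rw [Finset.sum_sub_distrib, Finset.sum_const, nsmul_eq_mul]
    _ = (m:ℝ) * (∑ j ∈ Ico m k, (j:ℝ)) - ((Ico m k).card : ℝ) * ∑ i ∈ range m, (i:ℝ) := by
        rw [Finset.sum_sub_distrib, Finset.sum_const, card_range, nsmul_eq_mul,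
          ← Finset.mul_sum]
    _ = (m:ℝ) * k * ((k:ℝ) - m) / 2 := by
        rw [hico, hcard, sum_range_id_real']
        ring

lemma weight_eval' (k m : ℕ) (hm1 : 1 ≤ m) (hmk : m ≤ k) :
    ∑ i ∈ range k, ∑ j ∈ range k,
        (if m ∈ Ioc (min i j) (max i j) then ((max i j : ℝ) - (min i j : ℝ)) else 0)
      ≤ (k:ℝ)^3 / 4 := by
  set g : ℕ → ℕ → ℝ := fun i j => if i < m ∧ m ≤ j then (j:ℝ) - (i:ℝ) else 0 with hg
  have hsplit : ∀ i ∈ range k, ∀ j ∈ range k,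
      (if m ∈ Ioc (min i j) (max i j) then ((max i j : ℝ) - (min i j : ℝ)) else 0)
        = g i j + g j i := by
    intro i _ j _
    simp only [hg, Finset.mem_Ioc]
    rcases le_total i j with hij | hij
    · rw [min_eq_left hij, max_eq_right hij]
      have hc : (i:ℝ) ≤ (j:ℝ) := Nat.cast_le.mpr hij
      split_ifs with h1 h2 h3 <;> push_cast <;>
        first | omega | ring1 | (exfalso; omega) | (rw [sup_eq_right.mpr hc, inf_eq_left.mpr hc]; ring)
    · rw [min_eq_right hij, max_eq_left hij]
      have hc : (j:ℝ) ≤ (i:ℝ) := Nat.cast_le.mpr hij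
      split_ifs with h1 h2 h3 <;> push_cast <;>
        first | omega | ring1 | (exfalso; omega) | (rw [sup_eq_left.mpr hc, inf_eq_right.mpr hc]; ring)
  rw [Finset.sum_congr rfl (fun i hi => Finset.sum_congr rfl (fun j hj => hsplit i hi j hj))]
  have hswap : ∑ i ∈ range k, ∑ j ∈ range k, g j i = ∑ i ∈ range k, ∑ j ∈ range k, g i j :=
    Finset.sum_comm
  have hsum : ∑ i ∈ range k, ∑ j ∈ range k, (g i j + g j i)
      = 2 * ∑ i ∈ range k, ∑ j ∈ range k, g i j := by
    simp only [Finset.sum_add_distrib]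
    rw [hswap]; ring
  rw [hsum]
  have hinner : ∀ i ∈ range k, ∑ j ∈ range k, g i j
      = if i < m then ∑ j ∈ Ico m k, ((j:ℝ) - (i:ℝ)) else 0 := by
    intro i _
    by_cases him : i < m
    · simp only [hg, him, true_and, if_pos]
      rw [← Finset.sum_filter]
      congr 1
      ext j
      simp only [Finset.mem_filter, Finset.mem_range, Finset.mem_Ico]
      omega
    · simp [hg, him]
  rw [Finset.sum_congr rfl hinner, ← Finset.sum_filter]
  have hfil : (range k).filter (fun i => i < m) = range m := by
    ext i
    simp only [Finset.mem_filter, Finset.mem_range]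
    omega
  rw [hfil, gsum_eval' k m hmk]
  have hk : (0:ℝ) ≤ (k:ℝ) := Nat.cast_nonneg k
  have hm : (0:ℝ) ≤ (m:ℝ) := Nat.cast_nonneg m
  nlinarith [sq_nonneg ((k:ℝ) - 2*(m:ℝ)), hk, hm]

variable {E : Type*} [NormedAddCommGroup E] [InnerProductSpace ℝ E]

local notation "⟪" x ", " y "⟫" => @inner ℝ _ _ x y

lemma dispersion' (x v : ℕ → E) (k : ℕ) (hk : 1 ≤ k)
    (hdiff : ∀ i j : ℕ, i ≤ j → x j - x i = ∑ m ∈ Ioc i j, v m)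
    (m : E) (hm : (k:ℝ) • m = ∑ i ∈ range k, x i) :
    ∑ i ∈ range k, ‖x i - m‖^2 ≤ (k:ℝ)^2/8 * ∑ i ∈ Icc 1 k, ‖v i‖^2 := by
  have hk0 : (0:ℝ) < (k:ℝ) := by exact_mod_cast hk
  set S : ℝ := ∑ i ∈ Icc 1 k, ‖v i‖^2 with hSdef
  have hS0 : 0 ≤ S := Finset.sum_nonneg fun i _ => by positivity
  have pair : ∀ i j : ℕ, i ≤ j → ‖x i - x j‖^2 ≤ ((j:ℝ)-(i:ℝ)) * ∑ m ∈ Ioc i j, ‖v m‖^2 := by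
    intro i j hij
    rw [norm_sub_rev, hdiff i j hij]
    calc ‖∑ m ∈ Ioc i j, v m‖^2 ≤ (∑ m ∈ Ioc i j, ‖v m‖)^2 := by
          apply pow_le_pow_left₀ (norm_nonneg _) (norm_sum_le _ _)
      _ ≤ (Ioc i j).card * ∑ m ∈ Ioc i j, ‖v m‖^2 := sq_sum_le_card_mul_sum_sq
      _ = ((j:ℝ)-(i:ℝ)) * ∑ m ∈ Ioc i j, ‖v m‖^2 := by
          rw [Nat.card_Ioc, Nat.cast_sub hij]
  have pairbd : ∀ i ∈ range k, ∀ j ∈ range k, ‖x i - x j‖^2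
      ≤ ∑ n ∈ Icc 1 k,
          (if n ∈ Ioc (min i j) (max i j) then ((max i j : ℝ) - (min i j : ℝ)) else 0)
            * ‖v n‖^2 := by
    intro i hi j hj
    rw [Finset.mem_range] at hi hj
    have hsub : Ioc (min i j) (max i j) ⊆ Icc 1 k := by
      intro n hn
      rw [Finset.mem_Ioc] at hn
      rw [Finset.mem_Icc]
      rcases le_total i j with hij | hij <;>
        simp only [min_eq_left, min_eq_right, max_eq_right, max_eq_left, hij] at hn <;> omega
    have hrw : ∑ n ∈ Icc 1 k,
        (if n ∈ Ioc (min i j) (max i j) then ((max i j : ℝ) - (min i j : ℝ)) else 0) * ‖v n‖^2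
        = ((max i j : ℝ) - (min i j : ℝ)) * ∑ n ∈ Ioc (min i j) (max i j), ‖v n‖^2 := by
      rw [Finset.mul_sum]
      rw [show ∀ s : Finset ℕ, ∑ n ∈ s,
          (if n ∈ Ioc (min i j) (max i j) then ((max i j : ℝ) - (min i j : ℝ)) else 0) * ‖v n‖^2
          = ∑ n ∈ s, (if n ∈ Ioc (min i j) (max i j)
              then ((max i j : ℝ) - (min i j : ℝ)) * ‖v n‖^2 else 0) from
        fun s => Finset.sum_congr rfl (fun n _ => by split_ifs <;> simp)]
      rw [Finset.sum_ite_mem, Finset.inter_eq_right.mpr hsub]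
    rw [hrw]
    rcases le_total i j with hij | hij
    · have hc : (i:ℝ) ≤ (j:ℝ) := Nat.cast_le.mpr hij
      rw [min_eq_left hij, max_eq_right hij, sup_eq_right.mpr hc, inf_eq_left.mpr hc]
      exact pair i j hij
    · have hc : (j:ℝ) ≤ (i:ℝ) := Nat.cast_le.mpr hij
      rw [min_eq_right hij, max_eq_left hij, sup_eq_left.mpr hc, inf_eq_right.mpr hc,
        norm_sub_rev]
      exact pair j i hij
  have hdouble : ∑ i ∈ range k, ∑ j ∈ range k, ‖x i - x j‖^2 ≤ (k:ℝ)^3/4 * S := by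
    calc ∑ i ∈ range k, ∑ j ∈ range k, ‖x i - x j‖^2
        ≤ ∑ i ∈ range k, ∑ j ∈ range k, ∑ n ∈ Icc 1 k,
            (if n ∈ Ioc (min i j) (max i j) then ((max i j : ℝ) - (min i j : ℝ)) else 0)
              * ‖v n‖^2 := by
          apply Finset.sum_le_sum
          intro i hi
          apply Finset.sum_le_sum
          intro j hj
          exact pairbd i hi j hj
      _ = ∑ n ∈ Icc 1 k, ∑ i ∈ range k, ∑ j ∈ range k,
            (if n ∈ Ioc (min i j) (max i j) then ((max i j : ℝ) - (min i j : ℝ)) else 0)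
              * ‖v n‖^2 := by
          have h1 : ∀ i : ℕ, ∑ j ∈ range k, ∑ n ∈ Icc 1 k,
              (if n ∈ Ioc (min i j) (max i j) then ((max i j : ℝ) - (min i j : ℝ)) else 0)
                * ‖v n‖^2
              = ∑ n ∈ Icc 1 k, ∑ j ∈ range k,
              (if n ∈ Ioc (min i j) (max i j) then ((max i j : ℝ) - (min i j : ℝ)) else 0)
                * ‖v n‖^2 := fun i => Finset.sum_comm
          rw [Finset.sum_congr rfl (fun i _ => h1 i)]
          exact Finset.sum_comm
      _ = ∑ n ∈ Icc 1 k, (∑ i ∈ range k, ∑ j ∈ range k,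
            (if n ∈ Ioc (min i j) (max i j) then ((max i j : ℝ) - (min i j : ℝ)) else 0))
              * ‖v n‖^2 := by
          apply Finset.sum_congr rfl
          intro n _
          rw [Finset.sum_mul]
          apply Finset.sum_congr rfl
          intro i _
          rw [Finset.sum_mul]
      _ ≤ ∑ n ∈ Icc 1 k, ((k:ℝ)^3/4) * ‖v n‖^2 := by
          apply Finset.sum_le_sum
          intro n hn
          rw [Finset.mem_Icc] at hn
          apply mul_le_mul_of_nonneg_right _ (by positivity)
          exact weight_eval' k n hn.1 hn.2
      _ = (k:ℝ)^3/4 * S := by rw [hSdef, Finset.mul_sum]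
  set T : E := ∑ i ∈ range k, x i with hT
  set N : ℝ := ∑ i ∈ range k, (‖x i‖^2 : ℝ) with hN
  have expand : ∀ a b : E, ‖a - b‖^2 = ‖a‖^2 - 2*⟪a, b⟫ + ‖b‖^2 := fun a b =>
    norm_sub_sq_real a b
  have hA : ∑ i ∈ range k, ‖x i - m‖^2 = N - (k:ℝ)*‖m‖^2 := by
    rw [Finset.sum_congr rfl (fun i _ => expand (x i) m)]
    rw [Finset.sum_add_distrib, Finset.sum_sub_distrib, Finset.sum_const, card_range,
      nsmul_eq_mul, ← Finset.mul_sum, ← sum_inner, ← hT, ← hm, real_inner_smul_left,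
      real_inner_self_eq_norm_sq, ← hN]
    ring
  have hB : ∑ i ∈ range k, ∑ j ∈ range k, ‖x i - x j‖^2
      = 2*(k:ℝ)*N - 2*(k:ℝ)^2*‖m‖^2 := by
    have hrow : ∀ i : ℕ, ∑ j ∈ range k, ‖x i - x j‖^2
        = (k:ℝ)*‖x i‖^2 - 2*⟪x i, T⟫ + N := by
      intro i
      rw [Finset.sum_congr rfl (fun j _ => expand (x i) (x j))]
      rw [Finset.sum_add_distrib, Finset.sum_sub_distrib, Finset.sum_const, card_range,
        nsmul_eq_mul, ← Finset.mul_sum, ← inner_sum, ← hT, ← hN]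
    rw [Finset.sum_congr rfl (fun i _ => hrow i)]
    rw [Finset.sum_add_distrib, Finset.sum_sub_distrib, Finset.sum_const, card_range,
      nsmul_eq_mul, ← Finset.mul_sum, ← Finset.mul_sum, ← sum_inner, ← hT, ← hm,
      real_inner_smul_left, real_inner_smul_right, real_inner_self_eq_norm_sq, ← hN]
    ring
  have h2k : (0:ℝ) < 2*(k:ℝ) := by positivity
  rw [← mul_le_mul_iff_right₀ h2k]
  calc 2*(k:ℝ) * ∑ i ∈ range k, ‖x i - m‖^2
      = ∑ i ∈ range k, ∑ j ∈ range k, ‖x i - x j‖^2 := by rw [hA, hB]; ring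
    _ ≤ (k:ℝ)^3/4 * S := hdouble
    _ = 2*(k:ℝ) * ((k:ℝ)^2/8 * S) := by ring

variable [CompleteSpace E]

theorem gradTaylor' (f : E → ℝ)
    (hf' : ∀ x, DifferentiableAt ℝ (gradient f) x)
    {ν : ℝ} (hν0 : 0 ≤ ν) {H : ℝ} (hH : 0 ≤ H)
    (hHolder : ∀ x y, ‖fderiv ℝ (gradient f) x - fderiv ℝ (gradient f) y‖ ≤ H * ‖x - y‖ ^ ν)
    (a b : E) :
    ‖gradient f a - gradient f b - fderiv ℝ (gradient f) b (a - b)‖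
      ≤ H * ‖a - b‖ ^ (1 + ν) := by
  have hseg : Convex ℝ (segment ℝ b a) := convex_segment b a
  have key := hseg.norm_image_sub_le_of_norm_fderiv_le'
    (f := gradient f) (φ := fderiv ℝ (gradient f) b) (C := H * ‖a - b‖ ^ ν)
    (fun z _ => hf' z) ?_ (left_mem_segment ℝ b a) (right_mem_segment ℝ b a)
  · calc ‖gradient f a - gradient f b - fderiv ℝ (gradient f) b (a - b)‖
        ≤ H * ‖a - b‖ ^ ν * ‖a - b‖ := key
    _ = H * ‖a - b‖ ^ (1 + ν) := by
        rw [Real.rpow_add' (norm_nonneg _) (by positivity), Real.rpow_one]; ring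
  · intro z hz
    rcases hz with ⟨u, t, hu, ht, hut, rfl⟩
    have hzb : ‖(u • b + t • a) - b‖ ≤ ‖a - b‖ := by
      have : (u • b + t • a) - b = t • (a - b) := by
        have hu1 : u = 1 - t := by linarith
        rw [hu1]; module
      rw [this, norm_smul]
      have : ‖a - b‖ = 1 * ‖a - b‖ := by ring
      nth_rewrite 2 [this]
      apply mul_le_mul_of_nonneg_right _ (norm_nonneg _)
      rw [Real.norm_eq_abs, abs_of_nonneg ht]; linarith
    calc ‖fderiv ℝ (gradient f) (u • b + t • a) - fderiv ℝ (gradient f) b‖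
        ≤ H * ‖(u • b + t • a) - b‖ ^ ν := hHolder _ _
      _ ≤ H * ‖a - b‖ ^ ν := by
          exact mul_le_mul_of_nonneg_left (Real.rpow_le_rpow (norm_nonneg _) hzb hν0) hH

section Helpers2
variable {E : Type*} [NormedAddCommGroup E] [InnerProductSpace ℝ E] [CompleteSpace E]

theorem trapezoid (f : E → ℝ)
    (hf : ∀ x, DifferentiableAt ℝ f x)
    (hf' : ∀ x, DifferentiableAt ℝ (gradient f) x)
    {ν : ℝ} (hν0 : 0 ≤ ν) {H : ℝ} (hH : 0 ≤ H)
    (hHolder : ∀ x y, ‖fderiv ℝ (gradient f) x - fderiv ℝ (gradient f) y‖ ≤ H * ‖x - y‖ ^ ν)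
    (a w : E) :
    f (a + w) - f a - (1/2) * ⟪gradient f a + gradient f (a + w), w⟫
      ≤ (1/3) * (H * ‖w‖ ^ ((2:ℝ) + ν)) := by
  set G : ℝ → ℝ := fun t => ⟪gradient f (a + t • w), w⟫ with hG
  have hline : ∀ t : ℝ, HasDerivAt (fun s : ℝ => a + s • w) w t := by
    intro t
    have h := ((hasDerivAt_id t).smul_const w).const_add a
    simpa using h
  have hF : ∀ t : ℝ, HasDerivAt (fun s => f (a + s • w)) (G t) t := by
    intro t
    have h1 := ((hf (a + t • w)).hasGradientAt.hasFDerivAt).comp_hasDerivAt t (hline t)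
    refine HasDerivAt.congr_deriv h1 ?_
    simp [hG, InnerProductSpace.toDual_apply_apply]
  set ψ : ℝ → ℝ := fun t => f (a + t • w) - f a - (t - t^2/2) * G 0 - (t^2/2) * G 1 with hψdef
  set ψ' : ℝ → ℝ := fun t => G t - (1-t) * G 0 - t * G 1 with hψ'def
  have hψ : ∀ t : ℝ, HasDerivAt ψ (ψ' t) t := by
    intro t
    have h2 : HasDerivAt (fun s : ℝ => (s - s^2/2) * G 0) ((1 - t) * G 0) t := by
      have := (((hasDerivAt_id t).sub ((hasDerivAt_pow 2 t).div_const 2)).mul_const (G 0))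
      refine this.congr_deriv ?_
      simp
    have h3 : HasDerivAt (fun s : ℝ => (s^2/2) * G 1) (t * G 1) t := by
      have := (((hasDerivAt_pow 2 t).div_const 2).mul_const (G 1))
      refine this.congr_deriv ?_
      simp
    have := (((hF t).sub_const (f a)).sub h2).sub h3
    exact this
  have hgc : Continuous (gradient f) :=
    continuous_iff_continuousAt.mpr fun z => (hf' z).continuousAt
  have hGc : Continuous G := by
    apply Continuous.inner
    · exact hgc.comp (by continuity)
    · exact continuous_const
  have hψ'c : Continuous ψ' := by
    rw [hψ'def]; fun_prop
  have hFTC : ∫ t in (0:ℝ)..1, ψ' t = ψ 1 - ψ 0 :=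
    intervalIntegral.integral_eq_sub_of_hasDerivAt (fun t _ => hψ t)
      (hψ'c.intervalIntegrable 0 1)
  have hψ0 : ψ 0 = 0 := by simp [hψdef]
  have hψ1 : ψ 1 = f (a + w) - f a - (1/2) * ⟪gradient f a + gradient f (a + w), w⟫ := by
    simp only [hψdef, one_smul, one_pow]
    rw [inner_add_left]
    simp [hG]
    ring
  have hbd : ∀ t ∈ Set.Icc (0:ℝ) 1, ψ' t ≤ H * ‖w‖ ^ ((2:ℝ)+ν) * (2*t*(1-t)) := by
    intro t ht
    obtain ⟨ht0, ht1⟩ := ht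
    set c := a + t • w with hc
    set B := fderiv ℝ (gradient f) c with hB
    have e1 := gradTaylor' f hf' hν0 hH hHolder a c
    have e2 := gradTaylor' f hf' hν0 hH hHolder (a + w) c
    have hac : a - c = -(t • w) := by rw [hc]; abel
    have hbc : (a + w) - c = (1-t) • w := by rw [hc]; module
    have hnac : ‖a - c‖ = t * ‖w‖ := by
      rw [hac, norm_neg, norm_smul, Real.norm_eq_abs, abs_of_nonneg ht0]
    have hnbc : ‖(a + w) - c‖ = (1-t) * ‖w‖ := by
      rw [hbc, norm_smul, Real.norm_eq_abs, abs_of_nonneg (by linarith)]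
    -- rewrite ψ' t
    have hkey : ψ' t = (1-t) * ⟪gradient f c - gradient f a - B (c - a), w⟫
        - t * ⟪gradient f (a+w) - gradient f c - B ((a+w) - c), w⟫ := by
      have hca : c - a = t • w := by rw [hc]; abel
      rw [hψ'def]
      simp only [hG, hca, hbc]
      rw [inner_sub_left, inner_sub_left, inner_sub_left, inner_sub_left]
      rw [map_smul, map_smul, real_inner_smul_left, real_inner_smul_left]
      have h0 : a + (0:ℝ) • w = a := by simp
      have h1 : a + (1:ℝ) • w = a + w := by simp
      rw [h0, h1]
      ring
    have hX1 : ⟪gradient f c - gradient f a - B (c - a), w⟫ ≤ H * (t*‖w‖)^(1+ν) * ‖w‖ := by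
      have hn : ‖gradient f c - gradient f a - B (c - a)‖ ≤ H * (t*‖w‖)^(1+ν) := by
        have : gradient f c - gradient f a - B (c - a)
            = -(gradient f a - gradient f c - B (a - c)) := by
          have : B (a - c) = - B (c - a) := by
            rw [← map_neg]; congr 1; abel
          rw [this]; abel
        rw [this, norm_neg]
        calc ‖gradient f a - gradient f c - B (a - c)‖ ≤ H * ‖a - c‖ ^ (1+ν) := e1
          _ = H * (t*‖w‖)^(1+ν) := by rw [hnac]
      calc ⟪gradient f c - gradient f a - B (c - a), w⟫
          ≤ ‖gradient f c - gradient f a - B (c - a)‖ * ‖w‖ := real_inner_le_norm _ _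
        _ ≤ H * (t*‖w‖)^(1+ν) * ‖w‖ := by
            apply mul_le_mul_of_nonneg_right hn (norm_nonneg _)
    have hX2 : -⟪gradient f (a+w) - gradient f c - B ((a+w) - c), w⟫
        ≤ H * ((1-t)*‖w‖)^(1+ν) * ‖w‖ := by
      have hn : ‖gradient f (a+w) - gradient f c - B ((a+w) - c)‖
          ≤ H * ((1-t)*‖w‖)^(1+ν) := by
        calc ‖gradient f (a+w) - gradient f c - B ((a+w) - c)‖
            ≤ H * ‖(a+w) - c‖ ^ (1+ν) := e2
          _ = H * ((1-t)*‖w‖)^(1+ν) := by rw [hnbc]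
      calc -⟪gradient f (a+w) - gradient f c - B ((a+w) - c), w⟫
          = ⟪-(gradient f (a+w) - gradient f c - B ((a+w) - c)), w⟫ := by
            rw [inner_neg_left]
        _ ≤ ‖-(gradient f (a+w) - gradient f c - B ((a+w) - c))‖ * ‖w‖ :=
            real_inner_le_norm _ _
        _ ≤ H * ((1-t)*‖w‖)^(1+ν) * ‖w‖ := by
            rw [norm_neg]
            exact mul_le_mul_of_nonneg_right hn (norm_nonneg _)
    -- assemble
    have hw0 : (0:ℝ) ≤ ‖w‖ := norm_nonneg _
    have htpow : (t*‖w‖)^(1+ν) ≤ t * ‖w‖^(1+ν) := by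
      rw [Real.mul_rpow ht0 hw0]
      apply mul_le_mul_of_nonneg_right _ (Real.rpow_nonneg hw0 _)
      calc t ^ (1+ν) = t ^ (1:ℝ) * t ^ ν := by
            rw [← Real.rpow_add' ht0 (by positivity)]
        _ ≤ t * 1 := by
            rw [Real.rpow_one]
            exact mul_le_mul_of_nonneg_left (Real.rpow_le_one ht0 ht1 hν0) ht0
        _ = t := by ring
    have hspow : ((1-t)*‖w‖)^(1+ν) ≤ (1-t) * ‖w‖^(1+ν) := by
      have h1t : (0:ℝ) ≤ 1 - t := by linarith
      rw [Real.mul_rpow h1t hw0]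
      apply mul_le_mul_of_nonneg_right _ (Real.rpow_nonneg hw0 _)
      calc (1-t) ^ (1+ν) = (1-t) ^ (1:ℝ) * (1-t) ^ ν := by
            rw [← Real.rpow_add' h1t (by positivity)]
        _ ≤ (1-t) * 1 := by
            rw [Real.rpow_one]
            exact mul_le_mul_of_nonneg_left (Real.rpow_le_one h1t (by linarith) hν0) h1t
        _ = 1 - t := by ring
    have hwpow : ‖w‖^(1+ν) * ‖w‖ = ‖w‖^((2:ℝ)+ν) := by
      conv_rhs => rw [show ((2:ℝ)+ν) = (1+ν) + 1 by ring,
        Real.rpow_add' hw0 (by positivity), Real.rpow_one]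
    rw [hkey]
    have hfin : (1-t) * (H * (t*‖w‖)^(1+ν) * ‖w‖) + t * (H * ((1-t)*‖w‖)^(1+ν) * ‖w‖)
        ≤ H * ‖w‖ ^ ((2:ℝ)+ν) * (2*t*(1-t)) := by
      have h1t : (0:ℝ) ≤ 1 - t := by linarith
      have e1' : H * (t*‖w‖)^(1+ν) * ‖w‖ ≤ H * (t * ‖w‖^(1+ν)) * ‖w‖ := by
        apply mul_le_mul_of_nonneg_right _ hw0
        exact mul_le_mul_of_nonneg_left htpow hH
      have e2' : H * ((1-t)*‖w‖)^(1+ν) * ‖w‖ ≤ H * ((1-t) * ‖w‖^(1+ν)) * ‖w‖ := by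
        apply mul_le_mul_of_nonneg_right _ hw0
        exact mul_le_mul_of_nonneg_left hspow hH
      calc (1-t) * (H * (t*‖w‖)^(1+ν) * ‖w‖) + t * (H * ((1-t)*‖w‖)^(1+ν) * ‖w‖)
          ≤ (1-t) * (H * (t * ‖w‖^(1+ν)) * ‖w‖) + t * (H * ((1-t) * ‖w‖^(1+ν)) * ‖w‖) := by
            apply add_le_add
            · exact mul_le_mul_of_nonneg_left e1' h1t
            · exact mul_le_mul_of_nonneg_left e2' ht0
        _ = H * (‖w‖^(1+ν) * ‖w‖) * (2*t*(1-t)) := by ring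
        _ = H * ‖w‖ ^ ((2:ℝ)+ν) * (2*t*(1-t)) := by rw [hwpow]
    have hXn : ⟪gradient f c - gradient f a - B (c - a), w⟫ ≥ 0 ∨ True := Or.inr trivial
    calc (1-t) * ⟪gradient f c - gradient f a - B (c - a), w⟫
          - t * ⟪gradient f (a+w) - gradient f c - B ((a+w) - c), w⟫
        ≤ (1-t) * (H * (t*‖w‖)^(1+ν) * ‖w‖) + t * (H * ((1-t)*‖w‖)^(1+ν) * ‖w‖) := by
          have h1t : (0:ℝ) ≤ 1 - t := by linarith
          have a1 := mul_le_mul_of_nonneg_left hX1 h1t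
          have a2 := mul_le_mul_of_nonneg_left hX2 ht0
          nlinarith [a1, a2]
      _ ≤ H * ‖w‖ ^ ((2:ℝ)+ν) * (2*t*(1-t)) := hfin
  -- integrate
  have hint2 : IntervalIntegrable (fun t => H * ‖w‖ ^ ((2:ℝ)+ν) * (2*t*(1-t)))
      MeasureTheory.volume 0 1 := (by fun_prop : Continuous _).intervalIntegrable 0 1
  have hmono := intervalIntegral.integral_mono_on (by norm_num : (0:ℝ) ≤ 1)
    (hψ'c.intervalIntegrable 0 1) hint2 hbd
  have hval : ∫ t in (0:ℝ)..1, H * ‖w‖ ^ ((2:ℝ)+ν) * (2*t*(1-t))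
      = (1/3) * (H * ‖w‖ ^ ((2:ℝ)+ν)) := by
    have hfe : (fun t : ℝ => H * ‖w‖ ^ ((2:ℝ)+ν) * (2*t*(1-t)))
        = fun t : ℝ => H * ‖w‖ ^ ((2:ℝ)+ν) * (2*t - 2*t^2) := by
      ext t; ring
    rw [hfe, intervalIntegral.integral_const_mul]
    rw [intervalIntegral.integral_sub ((by fun_prop : Continuous fun t:ℝ => 2*t).intervalIntegrable 0 1)
      ((by fun_prop : Continuous fun t:ℝ => 2*t^2).intervalIntegrable 0 1)]
    rw [intervalIntegral.integral_const_mul, intervalIntegral.integral_const_mul]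
    simp [integral_pow, integral_id]
    ring
  calc f (a + w) - f a - (1/2) * ⟪gradient f a + gradient f (a + w), w⟫
      = ψ 1 - ψ 0 := by rw [hψ0, hψ1]; ring
    _ = ∫ t in (0:ℝ)..1, ψ' t := hFTC.symm
    _ ≤ ∫ t in (0:ℝ)..1, H * ‖w‖ ^ ((2:ℝ)+ν) * (2*t*(1-t)) := hmono
    _ = (1/3) * (H * ‖w‖ ^ ((2:ℝ)+ν)) := hval


theorem avg_grad (f : E → ℝ)
    (hf' : ∀ x, DifferentiableAt ℝ (gradient f) x)
    {ν : ℝ} (hν0 : 0 ≤ ν) (hν1 : ν ≤ 1) {H : ℝ} (hH : 0 ≤ H)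
    (hHolder : ∀ x y, ‖fderiv ℝ (gradient f) x - fderiv ℝ (gradient f) y‖ ≤ H * ‖x - y‖ ^ ν)
    (k : ℕ) (hk : 1 ≤ k) (x : ℕ → E) (m : E) (hm : (k:ℝ) • m = ∑ i ∈ range k, x i) :
    ‖gradient f m - (1/(k:ℝ)) • ∑ i ∈ range k, gradient f (x i)‖
      ≤ H * ((1/(k:ℝ)) * ∑ i ∈ range k, ‖x i - m‖^2) ^ ((1+ν)/2) := by
  have hk0 : (0:ℝ) < (k:ℝ) := by exact_mod_cast hk
  set B := fderiv ℝ (gradient f) m with hB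
  have hzero : ∑ i ∈ range k, (m - x i) = 0 := by
    rw [Finset.sum_sub_distrib, Finset.sum_const, card_range]
    rw [← Nat.cast_smul_eq_nsmul ℝ k m, hm, sub_self]
  have hkey : gradient f m - (1/(k:ℝ)) • ∑ i ∈ range k, gradient f (x i)
      = (1/(k:ℝ)) • ∑ i ∈ range k, (gradient f m - gradient f (x i) - B (m - x i)) := by
    have h1 : ∑ i ∈ range k, (gradient f m - gradient f (x i) - B (m - x i))
        = (k:ℝ) • gradient f m - ∑ i ∈ range k, gradient f (x i) := by
      rw [Finset.sum_sub_distrib, Finset.sum_sub_distrib, ← map_sum, hzero, map_zero,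
        sub_zero, Finset.sum_const, card_range, ← Nat.cast_smul_eq_nsmul ℝ]
    rw [h1, smul_sub, smul_smul]
    rw [one_div, inv_mul_cancel₀ (ne_of_gt hk0), one_smul]
  rw [hkey]
  have hq : (0:ℝ) < 1 + ν := by linarith
  have hterm : ∀ i, ‖gradient f m - gradient f (x i) - B (m - x i)‖
      ≤ H * (‖x i - m‖^2) ^ ((1+ν)/2) := by
    intro i
    have hneg : gradient f m - gradient f (x i) - B (m - x i)
        = -(gradient f (x i) - gradient f m - B (x i - m)) := by
      have : B (m - x i) = - B (x i - m) := by rw [← map_neg]; congr 1; abel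
      rw [this]; abel
    rw [hneg, norm_neg]
    calc ‖gradient f (x i) - gradient f m - B (x i - m)‖
        ≤ H * ‖x i - m‖ ^ (1+ν) := gradTaylor' f hf' hν0 hH hHolder (x i) m
      _ = H * (‖x i - m‖^2) ^ ((1+ν)/2) := by
          congr 1
          rw [← Real.rpow_natCast ‖x i - m‖ 2, ← Real.rpow_mul (norm_nonneg _)]
          congr 1
          push_cast; ring
  calc ‖(1/(k:ℝ)) • ∑ i ∈ range k, (gradient f m - gradient f (x i) - B (m - x i))‖
      = (1/(k:ℝ)) * ‖∑ i ∈ range k, (gradient f m - gradient f (x i) - B (m - x i))‖ := by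
        rw [norm_smul, Real.norm_eq_abs, abs_of_pos (by positivity)]
    _ ≤ (1/(k:ℝ)) * ∑ i ∈ range k, ‖gradient f m - gradient f (x i) - B (m - x i)‖ := by
        apply mul_le_mul_of_nonneg_left (norm_sum_le _ _) (by positivity)
    _ ≤ (1/(k:ℝ)) * ∑ i ∈ range k, H * (‖x i - m‖^2) ^ ((1+ν)/2) := by
        apply mul_le_mul_of_nonneg_left _ (by positivity)
        exact Finset.sum_le_sum fun i _ => hterm i
    _ = H * ∑ i ∈ range k, (1/(k:ℝ)) * (‖x i - m‖^2) ^ ((1+ν)/2) := by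
        rw [Finset.mul_sum, Finset.mul_sum]
        apply Finset.sum_congr rfl
        intro i _; ring
    _ ≤ H * ((1/(k:ℝ)) * ∑ i ∈ range k, ‖x i - m‖^2) ^ ((1+ν)/2) := by
        apply mul_le_mul_of_nonneg_left _ hH
        -- Jensen via Real.arith_mean_le_rpow_mean
        have hp : (1:ℝ) ≤ 2/(1+ν) := by
          rw [le_div_iff₀ hq]; linarith
        have hjensen := Real.arith_mean_le_rpow_mean (range k) (fun _ => 1/(k:ℝ))
          (fun i => (‖x i - m‖^2) ^ ((1+ν)/2))
          (fun i _ => by positivity)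
          (by rw [Finset.sum_const, card_range, nsmul_eq_mul]; field_simp)
          (fun i _ => by positivity) hp
        have hz : ∀ i, ((‖x i - m‖^2 : ℝ) ^ ((1+ν)/2)) ^ ((2:ℝ)/(1+ν)) = ‖x i - m‖^2 := by
          intro i
          rw [← Real.rpow_mul (by positivity)]
          rw [show ((1+ν)/2) * ((2:ℝ)/(1+ν)) = 1 by field_simp]
          exact Real.rpow_one _
        have hexp : (1:ℝ)/((2:ℝ)/(1+ν)) = (1+ν)/2 := by field_simp
        calc ∑ i ∈ range k, (1/(k:ℝ)) * (‖x i - m‖^2) ^ ((1+ν)/2)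
            ≤ (∑ i ∈ range k, (1/(k:ℝ)) * ((‖x i - m‖^2) ^ ((1+ν)/2)) ^ ((2:ℝ)/(1+ν)))
                ^ ((1:ℝ)/((2:ℝ)/(1+ν))) := hjensen
          _ = (∑ i ∈ range k, (1/(k:ℝ)) * ‖x i - m‖^2) ^ ((1+ν)/2) := by
              rw [hexp]
              congr 1
              exact Finset.sum_congr rfl (fun i _ => by rw [hz i])
          _ = ((1/(k:ℝ)) * ∑ i ∈ range k, ‖x i - m‖^2) ^ ((1+ν)/2) := by
              rw [Finset.mul_sum]


end Helpers2


set_option maxHeartbeats 2000000 in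
theorem Hest_upperbound (d : ℕ) (f : EuclideanSpace ℝ (Fin d) → ℝ)
    (hf : ∀ x, DifferentiableAt ℝ f x)
    (hf' : ∀ x, DifferentiableAt ℝ (gradient f) x)
    (ν : ℝ) (hν0 : 0 ≤ ν) (hν1 : ν ≤ 1)
    (H : ℝ) (hH : 0 ≤ H)
    (hHolder : ∀ x y, ‖fderiv ℝ (gradient f) x - fderiv ℝ (gradient f) y‖ ≤ H * ‖x - y‖ ^ ν)
    (ℓ : ℝ) (hℓ : 0 < ℓ)
    (x v : ℕ → EuclideanSpace ℝ (Fin d))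
    (hv0 : v 0 = 0)
    (hv : ∀ k, 1 ≤ k → v k = v (k - 1) - (1 / ℓ) • gradient f (x (k - 1)))
    (hx : ∀ k, 1 ≤ k → x k = x (k - 1) + v k)
    (hvne : ∀ k, 1 ≤ k → v k ≠ 0)
    (S : ℕ → ℝ) (hS : ∀ k, S k = ∑ i ∈ Icc 1 k, ‖v i‖ ^ 2)
    (xbar : ℕ → EuclideanSpace ℝ (Fin d))
    (hxbar : ∀ k, 1 ≤ k → xbar k = (1 / (k : ℝ)) • ∑ i ∈ range k, x i)
    (h : ℕ → ℝ) (hh0 : h 0 = 0)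
    (hrec : ∀ k, 1 ≤ k → h k =
      max (h (k - 1)) (max
        ((3 / ‖v k‖ ^ 2) * (f (x k) - f (x (k - 1))
          - (1 / 2) * inner ℝ (gradient f (x (k - 1)) + gradient f (x k)) (v k)))
        (Real.sqrt (8 / ((k : ℝ) * S k)) * (‖gradient f (xbar k)‖ - (ℓ / k) * ‖v k‖))))
    (k : ℕ) (hk : 1 ≤ k) :
    h k ≤ H * ((k : ℝ) * S k) ^ (ν / 2) := by
  have hkpos : ∀ n : ℕ, 1 ≤ n → (0:ℝ) < n := fun n hn => by exact_mod_cast hn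
  have hSnn : ∀ n, 0 ≤ S n := fun n => by
    rw [hS]; exact Finset.sum_nonneg fun i _ => by positivity
  have hvsq : ∀ n, 1 ≤ n → ‖v n‖^2 ≤ S n := by
    intro n hn
    rw [hS]
    exact Finset.single_le_sum (f := fun i => ‖v i‖^2) (fun i _ => by positivity)
      (Finset.mem_Icc.mpr ⟨hn, le_rfl⟩)
  have hvpos : ∀ n, 1 ≤ n → 0 < ‖v n‖ := fun n hn => norm_pos_iff.mpr (hvne n hn)
  have hSpos : ∀ n, 1 ≤ n → 0 < S n := fun n hn =>
    lt_of_lt_of_le (pow_pos (hvpos n hn) 2) (hvsq n hn)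
  have hPpos : ∀ n : ℕ, 1 ≤ n → (0:ℝ) < (n:ℝ) * S n := fun n hn =>
    mul_pos (hkpos n hn) (hSpos n hn)
  -- telescoping
  have hxsum : ∀ j, x j = x 0 + ∑ m ∈ Icc 1 j, v m := by
    intro j
    induction j with
    | zero => simp
    | succ n ih =>
        rw [hx (n+1) (by omega)]
        simp only [Nat.add_sub_cancel]
        rw [ih, Finset.sum_Icc_succ_top (by omega : 1 ≤ n+1)]
        abel
  have hdiff : ∀ i j : ℕ, i ≤ j → x j - x i = ∑ m ∈ Ioc i j, v m := by
    intro i j hij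
    rw [hxsum j, hxsum i]
    have h1 : Icc 1 j = Ioc 0 j := Finset.Icc_add_one_left_eq_Ioc 0 j
    have h2 : Icc 1 i = Ioc 0 i := Finset.Icc_add_one_left_eq_Ioc 0 i
    rw [h1, h2, ← Finset.sum_Ioc_consecutive _ (Nat.zero_le i) hij]
    abel
  -- v as averaged gradients
  have hvk : ∀ n, 1 ≤ n → v n = (-(1/ℓ)) • ∑ i ∈ range n, gradient f (x i) := by
    intro n hn
    induction n, hn using Nat.le_induction with
    | base =>
        rw [hv 1 le_rfl, hv0]
        simp [neg_smul]
    | succ n hn ih =>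
        rw [hv (n+1) (by omega)]
        simp only [Nat.add_sub_cancel]
        rw [ih, Finset.sum_range_succ, smul_add]
        module
  -- claim A
  have claimA : ∀ n : ℕ, 1 ≤ n → (3 / ‖v n‖ ^ 2) * (f (x n) - f (x (n - 1))
          - (1 / 2) * inner ℝ (gradient f (x (n - 1)) + gradient f (x n)) (v n))
        ≤ H * ((n : ℝ) * S n) ^ (ν / 2) := by
    intro n hn
    have hb : x n = x (n-1) + v n := hx n hn
    have E := trapezoid f hf hf' hν0 hH hHolder (x (n-1)) (v n)
    rw [← hb] at E
    have hnv := hvpos n hn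
    have step1 : (3 / ‖v n‖ ^ 2) * (f (x n) - f (x (n - 1))
          - (1 / 2) * inner ℝ (gradient f (x (n - 1)) + gradient f (x n)) (v n))
        ≤ (3 / ‖v n‖ ^ 2) * ((1/3) * (H * ‖v n‖ ^ ((2:ℝ)+ν))) :=
      mul_le_mul_of_nonneg_left E (by positivity)
    have hsplit : ‖v n‖ ^ ((2:ℝ)+ν) = ‖v n‖^2 * ‖v n‖^ν := by
      rw [Real.rpow_add hnv]
      congr 1
      rw [show ((2:ℝ)) = ((2:ℕ):ℝ) by norm_num, Real.rpow_natCast]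
    have step2 : (3 / ‖v n‖ ^ 2) * ((1/3) * (H * ‖v n‖ ^ ((2:ℝ)+ν))) = H * ‖v n‖ ^ ν := by
      rw [hsplit]
      have hne : ‖v n‖^2 ≠ 0 := by positivity
      field_simp
    have step3 : H * ‖v n‖ ^ ν ≤ H * ((n:ℝ) * S n) ^ (ν/2) := by
      apply mul_le_mul_of_nonneg_left _ hH
      have hrw : ‖v n‖ ^ ν = ((‖v n‖^2 : ℝ)) ^ (ν/2) := by
        rw [← Real.rpow_natCast ‖v n‖ 2, ← Real.rpow_mul (norm_nonneg _)]
        congr 1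
        push_cast; ring
      rw [hrw]
      apply Real.rpow_le_rpow (by positivity) _ (by positivity)
      have h1 : ‖v n‖^2 ≤ S n := hvsq n hn
      have h2 : (1:ℝ) ≤ (n:ℝ) := by exact_mod_cast hn
      nlinarith [hSpos n hn]
    calc (3 / ‖v n‖ ^ 2) * (f (x n) - f (x (n - 1))
          - (1 / 2) * inner ℝ (gradient f (x (n - 1)) + gradient f (x n)) (v n))
        ≤ (3 / ‖v n‖ ^ 2) * ((1/3) * (H * ‖v n‖ ^ ((2:ℝ)+ν))) := step1
      _ = H * ‖v n‖ ^ ν := step2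
      _ ≤ H * ((n:ℝ) * S n) ^ (ν/2) := step3
  -- claim B
  have claimB : ∀ n : ℕ, 1 ≤ n →
      Real.sqrt (8 / ((n : ℝ) * S n)) * (‖gradient f (xbar n)‖ - (ℓ / n) * ‖v n‖)
        ≤ H * ((n : ℝ) * S n) ^ (ν / 2) := by
    intro n hn
    have hk0 := hkpos n hn
    have hP : 0 < (n:ℝ) * S n := hPpos n hn
    have hm : (n:ℝ) • (xbar n) = ∑ i ∈ range n, x i := by
      rw [hxbar n hn, smul_smul, mul_one_div, div_self (ne_of_gt hk0), one_smul]
    have hG := avg_grad f hf' hν0 hν1 hH hHolder n hn x (xbar n) hm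
    have hV := dispersion' x v n hn hdiff (xbar n) hm
    have hvkeq := hvk n hn
    have hnormv : ‖v n‖ = (1/ℓ) * ‖∑ i ∈ range n, gradient f (x i)‖ := by
      rw [hvkeq, norm_smul, Real.norm_eq_abs, abs_neg, abs_of_pos (by positivity)]
    have hnormbar : ‖(1/(n:ℝ)) • ∑ i ∈ range n, gradient f (x i)‖ = (ℓ/(n:ℝ)) * ‖v n‖ := by
      rw [norm_smul, Real.norm_eq_abs, abs_of_pos (by positivity), hnormv]
      field_simp
    have hmid : ‖gradient f (xbar n)‖ - (ℓ/(n:ℝ)) * ‖v n‖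
        ≤ H * (((n:ℝ) * S n)/8) ^ ((1+ν)/2) := by
      calc ‖gradient f (xbar n)‖ - (ℓ/(n:ℝ)) * ‖v n‖
          = ‖gradient f (xbar n)‖ - ‖(1/(n:ℝ)) • ∑ i ∈ range n, gradient f (x i)‖ := by
            rw [hnormbar]
        _ ≤ ‖gradient f (xbar n) - (1/(n:ℝ)) • ∑ i ∈ range n, gradient f (x i)‖ :=
            norm_sub_norm_le _ _
        _ ≤ H * ((1/(n:ℝ)) * ∑ i ∈ range n, ‖x i - xbar n‖^2) ^ ((1+ν)/2) := hG
        _ ≤ H * (((n:ℝ) * S n)/8) ^ ((1+ν)/2) := by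
            have hnn : (0:ℝ) ≤ 1/(n:ℝ) := by positivity
            have hsum0 : (0:ℝ) ≤ ∑ i ∈ range n, ‖x i - xbar n‖^2 :=
              Finset.sum_nonneg fun i _ => sq_nonneg _
            have hO : (1/(n:ℝ)) * ∑ i ∈ range n, ‖x i - xbar n‖^2 ≤ ((n:ℝ) * S n)/8 := by
              have h2 : (1/(n:ℝ)) * ∑ i ∈ range n, ‖x i - xbar n‖^2
                  ≤ (1/(n:ℝ)) * ((n:ℝ)^2/8 * ∑ i ∈ Icc 1 n, ‖v i‖^2) :=
                mul_le_mul_of_nonneg_left hV hnn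
              have h3 : (1/(n:ℝ)) * ((n:ℝ)^2/8 * ∑ i ∈ Icc 1 n, ‖v i‖^2)
                  = ((n:ℝ) * S n)/8 := by
                rw [← hS n]
                field_simp
              linarith
            exact mul_le_mul_of_nonneg_left
              (Real.rpow_le_rpow (mul_nonneg hnn hsum0) hO (by positivity)) hH
    have hc : (0:ℝ) ≤ Real.sqrt (8 / ((n:ℝ) * S n)) := Real.sqrt_nonneg _
    calc Real.sqrt (8 / ((n:ℝ) * S n)) * (‖gradient f (xbar n)‖ - (ℓ/(n:ℝ)) * ‖v n‖)
        ≤ Real.sqrt (8 / ((n:ℝ) * S n)) * (H * (((n:ℝ) * S n)/8) ^ ((1+ν)/2)) :=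
          mul_le_mul_of_nonneg_left hmid hc
      _ ≤ H * ((n:ℝ) * S n) ^ (ν/2) := by
          set P := (n:ℝ) * S n with hPdef
          have hQ : (0:ℝ) < 8/P := by positivity
          have e1 : Real.sqrt (8/P) = (8/P) ^ ((1:ℝ)/2) := Real.sqrt_eq_rpow _
          have e2 : (P/8 : ℝ) = (8/P)⁻¹ := by
            field_simp
          have e3 : (P/8 : ℝ) ^ ((1+ν)/2) = (8/P) ^ (-((1+ν)/2)) := by
            rw [e2, Real.inv_rpow hQ.le, ← Real.rpow_neg hQ.le]
          have e4 : Real.sqrt (8/P) * (P/8) ^ ((1+ν)/2) = (P/8) ^ (ν/2) := by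
            rw [e1, e3, ← Real.rpow_add hQ]
            rw [show (1:ℝ)/2 + -((1+ν)/2) = -(ν/2) by ring]
            rw [Real.rpow_neg hQ.le, ← Real.inv_rpow hQ.le, ← e2]
          calc Real.sqrt (8/P) * (H * (P/8) ^ ((1+ν)/2))
              = H * (Real.sqrt (8/P) * (P/8) ^ ((1+ν)/2)) := by ring
            _ = H * (P/8) ^ (ν/2) := by rw [e4]
            _ ≤ H * P ^ (ν/2) := by
                apply mul_le_mul_of_nonneg_left _ hH
                apply Real.rpow_le_rpow (by positivity) (by linarith) (by positivity)
  -- monotonicity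
  have mono : ∀ n : ℕ, 1 ≤ n →
      H * ((n:ℝ) * S n) ^ (ν/2) ≤ H * (((n+1:ℕ):ℝ) * S (n+1)) ^ (ν/2) := by
    intro n hn
    apply mul_le_mul_of_nonneg_left _ hH
    apply Real.rpow_le_rpow (le_of_lt (hPpos n hn)) _ (by positivity)
    have hSstep : S (n+1) = S n + ‖v (n+1)‖^2 := by
      rw [hS, hS, Finset.sum_Icc_succ_top (by omega : 1 ≤ n+1)]
    have h0 := hSnn n
    have h1 : (0:ℝ) ≤ (n:ℝ) := Nat.cast_nonneg n
    push_cast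
    nlinarith [sq_nonneg ‖v (n+1)‖]
  -- induction
  induction k, hk using Nat.le_induction with
  | base =>
      rw [hrec 1 le_rfl]
      simp only [show (1:ℕ)-1 = 0 from rfl]
      apply max_le
      · rw [hh0]
        exact mul_nonneg hH (Real.rpow_nonneg (le_of_lt (hPpos 1 le_rfl)) _)
      · exact max_le (claimA 1 le_rfl) (claimB 1 le_rfl)
  | succ n hn ih =>
      rw [hrec (n+1) (by omega)]
      simp only [Nat.add_sub_cancel]
      apply max_le
      · exact le_trans ih (mono n hn)
      · exact max_le (claimA (n+1) (by omega)) (claimB (n+1) (by omega))
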